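/- Let (w_n)_{n≥0} be an increasing sequence of positive integers with w_{n+1}/w_n → +∞ as n → ∞, and let (a_n)_{n≥0} be a bounded sequence of positive real numbers with ∑_n a_n = +∞. Let h : ℝ₊ → ℝ₊ be a continuous increasing function with h(n) = w_n for all n ∈ ℕ, and set θ_a(x) = ∑_{n ≤ x} a_n for x ∈ ℝ₊. Then ∑_{n≥0} a_n r^{w_n} is asymptotically equivalent to θ_a(h^{−1}(1/(1−r))) as r → 1⁻; that is, the ratio (∑_{n≥0} a_n r^{w_n}) / θ_a(h^{−1}(1/(1−r))) tends to 1 as r → 1⁻. -/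

import Mathlib

open Filter Set MeasureTheory
open scoped Topology ENNReal Real Classical

noncomputable section

/-- The weighted Taylor shift `T_α` acting on Taylor-coefficient sequences:
`(T_α a) k = a (k+1) * (1 + 1/(k+1))^α`. -/
def Tshift (α : ℝ) (a : ℕ → ℂ) : ℕ → ℂ :=
  fun k => a (k + 1) * (((1 + 1 / ((k : ℝ) + 1)) ^ α : ℝ) : ℂ)

/-- The holomorphic function on the unit disc determined by a coefficient sequence. -/
def sumFn (a : ℕ → ℂ) : ℂ → ℂ := fun z => ∑' k : ℕ, a k * z ^ k

/-- `a` is the Taylor-coefficient sequence of a function in `H(𝔻)`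
(the power series converges on every disc of radius `r < 1`). -/
def InHD (a : ℕ → ℂ) : Prop :=
  ∀ r : ℝ, 0 ≤ r → r < 1 → Summable (fun k : ℕ => ‖a k‖ * r ^ k)

/-- The integral mean `M_p(f, r)`, `1 ≤ p ≤ ∞`, of the function with coefficient
sequence `a`. -/
def Mp (p : ℝ≥0∞) (a : ℕ → ℂ) (r : ℝ) : ℝ :=
  if p = ∞ then
    sSup ((fun t : ℝ => ‖sumFn a (r * Complex.exp (Complex.I * t))‖) '' Set.Icc 0 (2 * π))
  else
    (1 / (2 * π) * ∫ t in (0:ℝ)..(2 * π),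
      ‖sumFn a (r * Complex.exp (Complex.I * t))‖ ^ p.toReal) ^ (1 / p.toReal)

/-- Upper weighted density of `A ⊆ ℕ` associated with a weight sequence `β`. -/
def upperDensityWt (β : ℕ → ℝ) (A : Set ℕ) : ℝ :=
  Filter.limsup (fun n : ℕ =>
    (∑ k ∈ Finset.Icc 1 n, A.indicator (fun j => β j) k) / ∑ k ∈ Finset.Icc 1 n, β k)
    Filter.atTop

/-- The weight sequence `β^γ = (e^{n^γ})`. -/
def betaGamma (γ : ℝ) : ℕ → ℝ := fun n => Real.exp ((n : ℝ) ^ γ)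

/-- `a` is hypercyclic for `T_α`: its orbit is dense in `H(𝔻)` for the topology of
uniform convergence on compact subsets of the unit disc. -/
def Hypercyclic (α : ℝ) (a : ℕ → ℂ) : Prop :=
  ∀ b : ℕ → ℂ, InHD b → ∀ K : Set ℂ, IsCompact K → K ⊆ Metric.ball (0 : ℂ) 1 →
    ∀ ε : ℝ, 0 < ε → ∃ n : ℕ, ∀ z ∈ K, ‖sumFn ((Tshift α)^[n] a) z - sumFn b z‖ < ε

/-- `a` is `𝒰_β`-frequently hypercyclic for `T_α`: for every nonempty basic open set of
`H(𝔻)`, the set of return times has positive upper `β`-density. -/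
def UFHCwt (β : ℕ → ℝ) (α : ℝ) (a : ℕ → ℂ) : Prop :=
  ∀ b : ℕ → ℂ, InHD b → ∀ K : Set ℂ, IsCompact K → K ⊆ Metric.ball (0 : ℂ) 1 →
    ∀ ε : ℝ, 0 < ε →
      0 < upperDensityWt β
        {n : ℕ | ∀ z ∈ K, ‖sumFn ((Tshift α)^[n] a) z - sumFn b z‖ < ε}

/-- `a` is `𝒰`-frequently hypercyclic for `T_α` (natural upper density of return times). -/
def UFreqHC (α : ℝ) (a : ℕ → ℂ) : Prop := UFHCwt (fun _ => 1) α a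

/-- The conjugate exponent `q` of `p` (`q = 1` when `p = ∞`). -/
def qConj (p : ℝ≥0∞) : ℝ := if p = ∞ then 1 else p.toReal / (p.toReal - 1)

/-- The quantity `1 / max(2, q)`, interpreted as `0` when `p = 1`. -/
def critFactor (p : ℝ≥0∞) : ℝ := if p = 1 then 0 else 1 / max 2 (qConj p)

/-- `limsup_{r → 1⁻}` of a real-valued function of `r ∈ (0,1)`, computed in `EReal`. -/
def limsupR (g : ℝ → ℝ) : EReal :=
  Filter.limsup (fun r : ℝ => (g r : EReal)) (nhdsWithin 1 (Set.Ioo 0 1))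

end


private lemma aux_growth (w : ℕ → ℕ) (N0 : ℕ) (hw : ∀ n, N0 ≤ n → 2 * w n ≤ w (n + 1)) :
    ∀ m, N0 ≤ m → ∀ j, (j + 1) * w m ≤ w (j + m) := by
  intro m hm j
  induction j with
  | zero => simp
  | succ j ih =>
    have h1 := hw (j + m) (le_trans hm (Nat.le_add_left _ _))
    have h2 : (j + 1 + 1) * w m ≤ 2 * ((j + 1) * w m) := by nlinarith
    calc (j + 1 + 1) * w m ≤ 2 * ((j + 1) * w m) := h2
      _ ≤ 2 * w (j + m) := by omega
      _ ≤ w (j + m + 1) := h1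
      _ = w (j + 1 + m) := by ring_nf

private lemma aux_summable (w : ℕ → ℕ) (hw : ∀ n, n ≤ w n) (a : ℕ → ℝ) (M : ℝ)
    (h0 : ∀ n, 0 ≤ a n) (hMa : ∀ n, a n ≤ M) (r : ℝ) (hr0 : 0 ≤ r) (hr1 : r < 1) :
    Summable (fun n => a n * r ^ w n) := by
  apply Summable.of_nonneg_of_le (fun n => mul_nonneg (h0 n) (pow_nonneg hr0 _))
    (fun n => ?_) ((summable_geometric_of_lt_one hr0 hr1).mul_left M)
  exact mul_le_mul (hMa n) (pow_le_pow_of_le_one hr0 hr1.le (hw n)) (pow_nonneg hr0 _)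
    (le_trans (h0 0) (hMa 0))

set_option maxHeartbeats 1600000 in
/-- Lemma 5.1: if `(w_n)` is an increasing sequence of positive integers with
`w_{n+1}/w_n → ∞`, `(a_n)` is bounded, positive, with divergent series, and `h` is a
continuous increasing function on `ℝ₊` with `h(n) = w_n`, then
`∑_n a_n r^{w_n} ∼ θ_a(h⁻¹(1/(1-r)))` as `r → 1⁻`, where `θ_a(x) = ∑_{n ≤ x} a_n`. -/
theorem stmt16 (w : ℕ → ℕ) (hwpos : ∀ n, 0 < w n) (hwmono : StrictMono w)
    (hwrat : Tendsto (fun n : ℕ => (w (n + 1) : ℝ) / (w n : ℝ)) atTop atTop)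
    (a : ℕ → ℝ) (hapos : ∀ n, 0 < a n) (habd : ∃ M : ℝ, ∀ n, a n ≤ M)
    (hadiv : Tendsto (fun n : ℕ => ∑ k ∈ Finset.range n, a k) atTop atTop)
    (h : ℝ → ℝ) (hmono : StrictMonoOn h (Set.Ici 0)) (hcont : ContinuousOn h (Set.Ici 0))
    (hpos : ∀ x : ℝ, 0 ≤ x → 0 ≤ h x) (hh : ∀ n : ℕ, h n = w n)
    (hinv : ℝ → ℝ) (hinv_left : ∀ x : ℝ, 0 ≤ x → hinv (h x) = x)
    (hinv_right : ∀ y : ℝ, h 0 ≤ y → 0 ≤ hinv y ∧ h (hinv y) = y) :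
    Tendsto (fun r : ℝ =>
        (∑' n : ℕ, a n * r ^ w n) /
          ∑ n ∈ Finset.range (⌊hinv (1 / (1 - r))⌋₊ + 1), a n)
      (nhdsWithin 1 (Set.Ioo 0 1)) (nhds 1) := by
  obtain ⟨M, hM⟩ := habd
  have hM0 : 0 < M := lt_of_lt_of_le (hapos 0) (hM 0)
  have hanonneg : ∀ n, 0 ≤ a n := fun n => (hapos n).le
  have hwle : ∀ n, n ≤ w n := fun n => hwmono.le_apply
  have hmonoOn : MonotoneOn h (Set.Ici 0) := hmono.monotoneOn
  set l := nhdsWithin (1 : ℝ) (Set.Ioo 0 1) with hl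
  have hinv_ge : ∀ x : ℝ, 0 ≤ x → ∀ y : ℝ, h x ≤ y → x ≤ hinv y := by
    intro x hx y hxy
    have h0x : h 0 ≤ h x := hmonoOn Set.self_mem_Ici (Set.mem_Ici.mpr hx) hx
    obtain ⟨hy0, heq⟩ := hinv_right y (h0x.trans hxy)
    by_contra hcon
    push_neg at hcon
    have := hmono (Set.mem_Ici.mpr hy0) (Set.mem_Ici.mpr hx) hcon
    rw [heq] at this
    linarith
  have hy_tend : Tendsto (fun r : ℝ => 1 / (1 - r)) l atTop := by
    have h1 : Tendsto (fun r : ℝ => 1 - r) l (nhdsWithin 0 (Set.Ioi 0)) := by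
      apply tendsto_nhdsWithin_of_tendsto_nhds_of_eventually_within
      · have : Tendsto (fun r : ℝ => 1 - r) (nhds 1) (nhds (1 - 1)) :=
          (continuous_const.sub continuous_id).tendsto 1
        simpa using this.mono_left nhdsWithin_le_nhds
      · filter_upwards [self_mem_nhdsWithin] with r hr
        exact sub_pos.mpr hr.2
    simpa [one_div, Function.comp_def] using tendsto_inv_nhdsGT_zero.comp h1
  have hx_tend : Tendsto (fun r : ℝ => hinv (1 / (1 - r))) l atTop := by
    rw [tendsto_atTop]
    intro b
    filter_upwards [hy_tend.eventually_ge_atTop (h (max b 0))] with r hr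
    exact le_trans (le_max_left b 0) (hinv_ge _ (le_max_right b 0) _ hr)
  have hN_tend : Tendsto (fun r : ℝ => ⌊hinv (1 / (1 - r))⌋₊) l atTop :=
    tendsto_nat_floor_atTop.comp hx_tend
  have hθ_tend : Tendsto
      (fun r : ℝ => ∑ n ∈ Finset.range (⌊hinv (1 / (1 - r))⌋₊ + 1), a n) l atTop :=
    (hadiv.comp (tendsto_add_atTop_nat 1)).comp hN_tend
  rw [Metric.tendsto_nhds]
  intro ε hε
  set η := min (ε / 4) (1 / 2) with hηdef
  have hη0 : 0 < η := lt_min (by linarith) one_half_pos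
  have hηhalf : η ≤ 1 / 2 := min_le_right _ _
  have hηε : η ≤ ε / 4 := min_le_left _ _
  obtain ⟨N0, hN0⟩ : ∃ N0, ∀ n, N0 ≤ n → max 2 (1 / η) ≤ (w (n + 1) : ℝ) / (w n : ℝ) :=
    eventually_atTop.mp (hwrat.eventually_ge_atTop _)
  have hdouble : ∀ n, N0 ≤ n → 2 * w n ≤ w (n + 1) := by
    intro n hn
    have h2 : (2 : ℝ) ≤ (w (n + 1) : ℝ) / (w n : ℝ) := le_trans (le_max_left _ _) (hN0 n hn)
    have hwn : (0 : ℝ) < (w n : ℝ) := by exact_mod_cast hwpos n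
    rw [le_div_iff₀ hwn] at h2
    exact_mod_cast h2
  have hratio : ∀ n, N0 ≤ n → (w n : ℝ) ≤ η * (w (n + 1) : ℝ) := by
    intro n hn
    have h2 : 1 / η ≤ (w (n + 1) : ℝ) / (w n : ℝ) := le_trans (le_max_right _ _) (hN0 n hn)
    have hwn : (0 : ℝ) < (w n : ℝ) := by exact_mod_cast hwpos n
    rw [div_le_div_iff₀ hη0 hwn] at h2
    nlinarith
  filter_upwards [self_mem_nhdsWithin, hy_tend.eventually_ge_atTop (h 0),
    hN_tend.eventually_ge_atTop (N0 + 1), hθ_tend.eventually_ge_atTop (M / η),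
    hθ_tend.eventually_ge_atTop M] with r hr hhy hNr hθη hθM
  obtain ⟨hr0, hr1⟩ := hr
  set y := 1 / (1 - r) with hydef
  set x := hinv y with hxdef
  set N := ⌊x⌋₊ with hNdef
  set θ := ∑ n ∈ Finset.range (N + 1), a n with hθdef
  obtain ⟨hx0, hhx⟩ := hinv_right y hhy
  have h1r : 0 < 1 - r := by linarith
  have hwNle : (w N : ℝ) ≤ y := by
    have hfl : ((N : ℝ)) ≤ x := Nat.floor_le hx0
    have := hmonoOn (Set.mem_Ici.mpr (Nat.cast_nonneg N)) (Set.mem_Ici.mpr hx0) hfl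
    rw [hh N, hhx] at this
    exact this
  have hwN1 : y < (w (N + 1) : ℝ) := by
    have hfl : x < ((N + 1 : ℕ) : ℝ) := by
      push_cast
      exact Nat.lt_floor_add_one x
    have := hmono (Set.mem_Ici.mpr hx0) (Set.mem_Ici.mpr (Nat.cast_nonneg (N + 1))) hfl
    rw [hh (N + 1), hhx] at this
    exact this
  have hwN1r : 1 ≤ (w (N + 1) : ℝ) * (1 - r) := by
    rw [hydef] at hwN1
    rw [div_lt_iff₀ h1r] at hwN1
    linarith
  have hwNr : (w N : ℝ) * (1 - r) ≤ 1 := by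
    rw [hydef] at hwNle
    rw [le_div_iff₀ h1r] at hwNle
    linarith
  obtain ⟨K, hK⟩ : ∃ K, N = K + 1 := ⟨N - 1, by omega⟩
  clear_value x N
  clear hydef hxdef hNdef
  have hKN0 : N0 ≤ K := by omega
  have hsum : Summable (fun n => a n * r ^ w n) :=
    aux_summable w hwle a M hanonneg hM r hr0.le hr1
  have hterm_nonneg : ∀ n, 0 ≤ a n * r ^ w n :=
    fun n => mul_nonneg (hanonneg n) (pow_nonneg hr0.le _)
  have hθpos : 0 < θ := lt_of_lt_of_le hM0 hθM
  have hMθ : M ≤ η * θ := by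
    rw [div_le_iff₀ hη0] at hθη
    nlinarith
  -- Upper bound: S ≤ θ + M
  set S := ∑' n, a n * r ^ w n with hSdef
  have hsplit : (∑ n ∈ Finset.range (N + 1), a n * r ^ w n)
      + (∑' j, a (j + (N + 1)) * r ^ w (j + (N + 1))) = S :=
    Summable.sum_add_tsum_nat_add (N + 1) hsum
  have hhead : ∑ n ∈ Finset.range (N + 1), a n * r ^ w n ≤ θ := by
    apply Finset.sum_le_sum
    intro n _
    exact mul_le_of_le_one_right (hanonneg n) (pow_le_one₀ hr0.le hr1.le)
  set q := r ^ w (N + 1) with hqdef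
  have hq0 : 0 ≤ q := pow_nonneg hr0.le _
  have hq_half : q ≤ 1 / 2 := by
    have hber : 1 + (w (N + 1) : ℝ) * (1 - r) ≤ (1 + (1 - r)) ^ (w (N + 1)) :=
      one_add_mul_le_pow (by linarith) _
    have hmul : q * (1 + (1 - r)) ^ (w (N + 1)) ≤ 1 := by
      rw [hqdef, ← mul_pow]
      calc (r * (1 + (1 - r))) ^ w (N + 1) ≤ 1 ^ w (N + 1) := by
            apply pow_le_pow_left₀ (by nlinarith) (by nlinarith)
        _ = 1 := one_pow _
    have hP2 : (2 : ℝ) ≤ (1 + (1 - r)) ^ (w (N + 1)) := by linarith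
    have h2q : q * 2 ≤ q * ((1 + (1 - r)) ^ (w (N + 1))) :=
      mul_le_mul_of_nonneg_left hP2 hq0
    linarith
  have hq1 : q < 1 := by linarith
  have hgrow : ∀ j : ℕ, (j + 1) * w (N + 1) ≤ w (j + (N + 1)) :=
    aux_growth w N0 hdouble (N + 1) (by omega)
  have htail : (∑' j, a (j + (N + 1)) * r ^ w (j + (N + 1))) ≤ M := by
    have hmaj : Summable (fun j : ℕ => (M * q) * q ^ j) :=
      (summable_geometric_of_lt_one hq0 hq1).mul_left (M * q)
    have hle : (∑' j, a (j + (N + 1)) * r ^ w (j + (N + 1))) ≤ ∑' j, (M * q) * q ^ j := by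
      apply Summable.tsum_le_tsum _
        ((summable_nat_add_iff (f := fun n => a n * r ^ w n) (N + 1)).mpr hsum) hmaj
      intro j
      have h1 : r ^ w (j + (N + 1)) ≤ q ^ (j + 1) := by
        calc r ^ w (j + (N + 1)) ≤ r ^ ((j + 1) * w (N + 1)) :=
              pow_le_pow_of_le_one hr0.le hr1.le (hgrow j)
          _ = q ^ (j + 1) := by rw [hqdef, ← pow_mul, mul_comm]
      calc a (j + (N + 1)) * r ^ w (j + (N + 1)) ≤ M * q ^ (j + 1) :=
            mul_le_mul (hM _) h1 (pow_nonneg hr0.le _) hM0.le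
        _ = (M * q) * q ^ j := by ring
    have hsumgeo : (∑' j : ℕ, (M * q) * q ^ j) = (M * q) * (1 - q)⁻¹ := by
      rw [tsum_mul_left, tsum_geometric_of_lt_one hq0 hq1]
    have hqq : q * (1 - q)⁻¹ ≤ 1 := by
      rw [← div_eq_mul_inv, div_le_one (by linarith)]
      linarith
    calc (∑' j, a (j + (N + 1)) * r ^ w (j + (N + 1))) ≤ ∑' j, (M * q) * q ^ j := hle
      _ = M * (q * (1 - q)⁻¹) := by rw [hsumgeo]; ring
      _ ≤ M * 1 := mul_le_mul_of_nonneg_left hqq hM0.le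
      _ = M := mul_one M
  have hupper : S ≤ θ + M := by
    rw [← hsplit]
    exact add_le_add hhead htail
  -- Lower bound
  have hwK : (w K : ℝ) ≤ η * (w N : ℝ) := by
    have := hratio K hKN0
    rw [hK]
    exact this
  have hwKsmall : (w K : ℝ) * (1 - r) ≤ η := by
    have hwn : (0 : ℝ) ≤ (w N : ℝ) := Nat.cast_nonneg _
    nlinarith
  have hrK : 1 - η ≤ r ^ w K := by
    have h2 : 1 + (w K : ℝ) * (r - 1) ≤ (1 + (r - 1)) ^ (w K) :=
      one_add_mul_le_pow (by linarith) _
    have h3 : (1 : ℝ) + (r - 1) = r := by ring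
    rw [h3] at h2
    nlinarith
  have hlow2 : (1 - η) * ∑ n ∈ Finset.range N, a n
      ≤ ∑ n ∈ Finset.range N, a n * r ^ w n := by
    rw [Finset.mul_sum]
    apply Finset.sum_le_sum
    intro n hn
    have hn' : n ≤ K := by
      rw [Finset.mem_range, hK] at hn
      omega
    have hle : r ^ w K ≤ r ^ w n :=
      pow_le_pow_of_le_one hr0.le hr1.le (hwmono.monotone hn')
    nlinarith [hanonneg n]
  have hlow1 : ∑ n ∈ Finset.range N, a n * r ^ w n ≤ S :=
    Summable.sum_le_tsum _ (fun n _ => hterm_nonneg n) hsum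
  have hθsplit : θ = (∑ n ∈ Finset.range N, a n) + a N := Finset.sum_range_succ a N
  have hθN : θ - M ≤ ∑ n ∈ Finset.range N, a n := by
    have := hM N
    linarith
  have hlower : (1 - 2 * η) * θ ≤ S := by
    have h1η : 0 ≤ 1 - η := by linarith
    have hsum_nonneg : 0 ≤ ∑ n ∈ Finset.range N, a n :=
      Finset.sum_nonneg fun n _ => hanonneg n
    have : (1 - η) * (θ - M) ≤ (1 - η) * ∑ n ∈ Finset.range N, a n :=
      mul_le_mul_of_nonneg_left hθN h1η
    nlinarith
  -- Conclusion
  rw [Real.dist_eq]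
  have hub : S / θ ≤ 1 + η := by
    rw [div_le_iff₀ hθpos]
    nlinarith
  have hlb : 1 - 2 * η ≤ S / θ := by
    rw [le_div_iff₀ hθpos]
    nlinarith
  rw [abs_lt]
  constructor <;> [linarith; linarith]
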